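/- Let $0 < \kappa < 1/2$, $b > 0$ with $b^2 < (1-2\kappa)/(2\kappa)$, $k_1 \in [-\pi,\pi]$, and $a \in \mathbb{R}$ with $|a| = b$ small enough that $\cosh a \leq 1 + b^2$ and $|\sinh a| \leq 2b$. Define the complex number $w := 1 - \kappa + \kappa \cos k_1 \cosh a - i \kappa \sin k_1 \sinh a$, and write $w = \rho e^{i\beta}$ with $\rho = |w|$ and $\beta = \arg w$. Then $\rho \leq 1 + \kappa[(1+\pi^2) b^2 - k_1^2/\pi^2]$ and $|\beta| \leq \frac{4\kappa}{1-2\kappa}\, |k_1|\, b$. -/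

import Mathlib

lemma abs_arctan_le' (x : ℝ) : |Real.arctan x| ≤ |x| := by
  have key : ∀ t : ℝ, 0 ≤ t → Real.arctan t ≤ t := by
    intro t ht
    have h0 : 0 ≤ Real.arctan t := by
      simpa using Real.arctan_strictMono.monotone ht
    calc Real.arctan t ≤ Real.tan (Real.arctan t) :=
          Real.le_tan h0 (Real.arctan_lt_pi_div_two t)
      _ = t := Real.tan_arctan t
  rcases le_total 0 x with h | h
  · rw [abs_of_nonneg (by simpa using Real.arctan_strictMono.monotone h),
      abs_of_nonneg h]
    exact key x h
  · rw [abs_of_nonpos (by simpa using Real.arctan_strictMono.monotone h),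
      abs_of_nonpos h, ← Real.arctan_neg]
    exact key (-x) (by linarith)

/-- Bounds on the modulus and argument of the analytic continuation
`w = B(k₁ + ia) = 1 - κ + κ cos k₁ cosh a - i κ sin k₁ sinh a`. -/
theorem B_complex_modulus_arg_bounds (κ b k1 a : ℝ)
    (hκ : 0 < κ) (hκ' : κ < 1/2) (hb : 0 < b)
    (hb2 : b^2 < (1 - 2*κ) / (2*κ))
    (hk1 : k1 ∈ Set.Icc (-Real.pi) Real.pi)
    (ha : |a| = b)
    (hcosh : Real.cosh a ≤ 1 + b^2)
    (hsinh : |Real.sinh a| ≤ 2 * b) :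
    ‖(((((1 - κ + κ * Real.cos k1 * Real.cosh a : ℝ)) : ℂ)
        - Complex.I * ((κ * Real.sin k1 * Real.sinh a : ℝ) : ℂ)) : ℂ)‖
      ≤ 1 + κ * ((1 + Real.pi^2) * b^2 - k1^2 / Real.pi^2) ∧
    |Complex.arg ((((1 - κ + κ * Real.cos k1 * Real.cosh a : ℝ)) : ℂ)
        - Complex.I * ((κ * Real.sin k1 * Real.sinh a : ℝ) : ℂ))|
      ≤ 4 * κ / (1 - 2*κ) * |k1| * b := by
  have hπ : (0:ℝ) < Real.pi := Real.pi_pos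
  set x : ℝ := 1 - κ + κ * Real.cos k1 * Real.cosh a with hxdef
  set y : ℝ := κ * Real.sin k1 * Real.sinh a with hydef
  set z : ℂ := ((x : ℝ) : ℂ) - Complex.I * ((y : ℝ) : ℂ) with hzdef
  have hre : z.re = x := by simp [hzdef]
  have him : z.im = -y := by simp [hzdef]
  clear_value x y z
  -- basic facts
  have hk1' : |k1| ≤ Real.pi := abs_le.mpr ⟨hk1.1, hk1.2⟩
  have hcosh1 : 1 ≤ Real.cosh a := Real.one_le_cosh a
  have hcos1 : Real.cos k1 ≤ 1 := Real.cos_le_one k1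
  have hcosm1 : -1 ≤ Real.cos k1 := Real.neg_one_le_cos k1
  have hb2' : b^2 * (2*κ) < 1 - 2*κ := (lt_div_iff₀ (by positivity)).mp hb2
  -- 1 - cos k1 ≥ 2 k1^2 / π^2
  have hcoslow : 2 * (k1^2 / Real.pi^2) ≤ 1 - Real.cos k1 := by
    have hcosid : Real.cos k1 = 1 - 2 * Real.sin (k1/2)^2 := by
      have h1 := Real.cos_two_mul (k1/2)
      have h2 := Real.sin_sq_add_cos_sq (k1/2)
      rw [show (2:ℝ) * (k1/2) = k1 by ring] at h1
      nlinarith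
    have hs : 2 / Real.pi * (|k1|/2) ≤ Real.sin (|k1|/2) :=
      Real.mul_le_sin (by positivity) (by linarith)
    have hsq : Real.sin (|k1|/2)^2 = Real.sin (k1/2)^2 := by
      rcases abs_cases k1 with ⟨h, _⟩ | ⟨h, _⟩
      · rw [h]
      · rw [h, neg_div, Real.sin_neg]; ring
    have hnn : (0:ℝ) ≤ 2 / Real.pi * (|k1|/2) := by positivity
    have h2 : (2 / Real.pi * (|k1|/2))^2 ≤ Real.sin (|k1|/2)^2 :=
      pow_le_pow_left₀ hnn hs 2
    have heq : 2 / Real.pi * (|k1|/2) = |k1| / Real.pi := by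
      field_simp
    have h3 : (2 / Real.pi * (|k1|/2))^2 = k1^2 / Real.pi^2 := by
      rw [heq, div_pow, sq_abs]
    linarith [hsq ▸ h2, h3 ▸ h2]
  -- bounds on x
  have hcc : Real.cos k1 * Real.cosh a ≤ Real.cos k1 + (Real.cosh a - 1) := by
    nlinarith
  have hcc2 : κ * (Real.cos k1 * Real.cosh a)
      ≤ κ * (Real.cos k1 + (Real.cosh a - 1)) :=
    mul_le_mul_of_nonneg_left hcc hκ.le
  have hcl : κ * (2 * (k1^2/Real.pi^2)) ≤ κ * (1 - Real.cos k1) :=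
    mul_le_mul_of_nonneg_left hcoslow hκ.le
  have hch : κ * (Real.cosh a - 1) ≤ κ * b^2 := by nlinarith
  have hxup : x ≤ 1 - 2*κ*(k1^2/Real.pi^2) + κ*b^2 := by
    rw [hxdef]; linarith
  have hlow1 : -(Real.cosh a) ≤ Real.cos k1 * Real.cosh a := by
    nlinarith [Real.cosh_pos (x := a)]
  have hlow2 : κ * (-(Real.cosh a)) ≤ κ * (Real.cos k1 * Real.cosh a) :=
    mul_le_mul_of_nonneg_left hlow1 hκ.le
  have hlow3 : κ * Real.cosh a ≤ κ * (1 + b^2) :=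
    mul_le_mul_of_nonneg_left hcosh hκ.le
  have hxlow : (1 - 2*κ)/2 ≤ x := by
    rw [hxdef]; linarith
  have hxpos : 0 < x := by linarith
  -- bound on |y|
  have hsin : |Real.sin k1| ≤ |k1| := Real.abs_sin_le_abs
  have hy1 : |y| ≤ 2 * κ * |k1| * b := by
    rw [hydef, abs_mul, abs_mul, abs_of_pos hκ]
    calc κ * |Real.sin k1| * |Real.sinh a|
        ≤ κ * |k1| * (2*b) := by
          exact mul_le_mul (mul_le_mul_of_nonneg_left hsin hκ.le) hsinh
            (abs_nonneg _) (by positivity)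
      _ = 2 * κ * |k1| * b := by ring
  have hamgm : 2 * |k1| * b ≤ Real.pi^2 * b^2 + k1^2 / Real.pi^2 := by
    have hu : (|k1|/Real.pi)^2 = k1^2/Real.pi^2 := by rw [div_pow, sq_abs]
    have h := sq_nonneg (Real.pi * b - |k1| / Real.pi)
    have hexp : (Real.pi * b - |k1| / Real.pi)^2
        = Real.pi^2*b^2 - 2*(Real.pi*b*(|k1|/Real.pi)) + (|k1|/Real.pi)^2 := by
      ring
    have hmul : Real.pi*b*(|k1|/Real.pi) = |k1| * b := by
      field_simp
    linarith [hu ▸ hexp ▸ h, hmul]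
  have hy2 : |y| ≤ κ * (Real.pi^2 * b^2 + k1^2 / Real.pi^2) := by
    calc |y| ≤ 2 * κ * |k1| * b := hy1
      _ = κ * (2 * |k1| * b) := by ring
      _ ≤ κ * (Real.pi^2 * b^2 + k1^2 / Real.pi^2) := by
          exact mul_le_mul_of_nonneg_left hamgm hκ.le
  constructor
  · -- modulus bound
    calc ‖z‖ ≤ |z.re| + |z.im| := Complex.norm_le_abs_re_add_abs_im z
      _ = x + |y| := by rw [hre, him, abs_neg, abs_of_pos hxpos]
      _ ≤ (1 - 2*κ*(k1^2/Real.pi^2) + κ*b^2) + κ * (Real.pi^2*b^2 + k1^2/Real.pi^2) := by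
          linarith
      _ = 1 + κ * ((1 + Real.pi^2) * b^2 - k1^2 / Real.pi^2) := by ring
  · -- argument bound
    have hargsmall : |z.arg| < Real.pi / 2 :=
      Complex.abs_arg_lt_pi_div_two_iff.mpr (Or.inl (by rw [hre]; exact hxpos))
    have harg : z.arg = Real.arctan (z.im / z.re) := by
      rw [← Complex.tan_arg, Real.arctan_tan (neg_lt_of_abs_lt hargsmall)
        (lt_of_abs_lt hargsmall)]
    rw [harg]
    calc |Real.arctan (z.im / z.re)| ≤ |z.im / z.re| := abs_arctan_le' _
      _ = |y| / x := by
          rw [hre, him, abs_div, abs_neg, abs_of_pos hxpos]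
      _ ≤ 4 * κ / (1 - 2*κ) * |k1| * b := by
          have h12 : (0:ℝ) < 1 - 2*κ := by linarith
          rw [div_le_iff₀ hxpos,
            show 4 * κ / (1 - 2*κ) * |k1| * b * x
              = 4 * κ * |k1| * b * x / (1 - 2*κ) by ring,
            le_div_iff₀ h12]
          have hcnn : (0:ℝ) ≤ 4 * κ * |k1| * b :=
            mul_nonneg (mul_nonneg (by linarith) (abs_nonneg _)) hb.le
          have h1 := mul_le_mul_of_nonneg_right hy1 h12.le
          have h2 := mul_le_mul_of_nonneg_left hxlow hcnn
          linarith
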